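/- For every x ∈ (0,1), the sum of SL(2,ℝ) blocks over even spins ℓ ≥ 2 weighted by the inverse conformal spin evaluates in closed form: ∑_{ℓ = 2,4,6,…} (Γ(ℓ+1)²/Γ(2ℓ+1)) · (2/(ℓ(ℓ+1))) · k_{ℓ+1}(x) = (1/2)·log²(1−x) + 2·Li₂(x) + 2·log(1−x). -/

import Mathlib

open Real

/-- Pochhammer symbol `(a)_n = a (a+1) ⋯ (a+n-1)`. -/
noncomputable def poch (a : ℝ) (n : ℕ) : ℝ := (ascPochhammer ℝ n).eval a

/-- Gauss hypergeometric series `₂F₁(a,b;c;x)`. -/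
noncomputable def F21 (a b c x : ℝ) : ℝ :=
  ∑' n : ℕ, poch a n * poch b n / (poch c n * (n.factorial : ℝ)) * x ^ n

/-- The SL(2,ℝ) collinear conformal block `k_β(x) = x^β ₂F₁(β,β;2β;x)`. -/
noncomputable def kblock (β x : ℝ) : ℝ := x ^ β * F21 β β (2 * β) x

/-- The dilogarithm `Li₂(x) = ∑_{n≥1} xⁿ/n²`. -/
noncomputable def Li2 (x : ℝ) : ℝ := ∑' n : ℕ, x ^ (n + 1) / ((n : ℝ) + 1) ^ 2

set_option linter.unreachableTactic false
set_option linter.unusedTactic false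
set_option linter.constructorNameAsVariable false

noncomputable def Hsum (N : ℕ) : ℝ := ∑ i ∈ Finset.range N, 1 / ((i : ℝ) + 1)

noncomputable def Wterm (n N : ℕ) : ℝ :=
  (2 / (2 * (n : ℝ) + 2) + 2 / (2 * (n : ℝ) + 3)) * (N : ℝ)
    * ((N - 1).factorial : ℝ) ^ 2
    / (((N + 2 * n + 2).factorial : ℝ) * ((N - 3 - 2 * n).factorial : ℝ))

noncomputable def gfun (N ℓ : ℕ) : ℝ :=
  ((N : ℝ) + (ℓ : ℝ)) * ((N - 1).descFactorial (ℓ - 1) : ℝ) * ((N - 1).factorial : ℝ)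
    / ((N + ℓ).factorial : ℝ)

lemma fact_ne (k : ℕ) : ((k.factorial : ℝ)) ≠ 0 :=
  Nat.cast_ne_zero.mpr (Nat.factorial_ne_zero k)

lemma df_cast (x k : ℕ) (h : k ≤ x) :
    ((x.descFactorial k : ℝ)) = (x.factorial : ℝ) / ((x - k).factorial : ℝ) := by
  rw [eq_div_iff (fact_ne _), mul_comm]
  exact_mod_cast congrArg (Nat.cast (R := ℝ)) (Nat.factorial_mul_descFactorial h)

lemma gfun_top (N : ℕ) (h : 1 ≤ N) : gfun N (N + 1) = 0 := by
  unfold gfun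
  rw [show N + 1 - 1 = N from rfl, Nat.descFactorial_of_lt (by omega)]
  simp

lemma gfun_two (N : ℕ) (h : 1 ≤ N) :
    gfun N 2 = ((N : ℝ) - 1) / ((N : ℝ) * ((N : ℝ) + 1)) := by
  obtain ⟨M, rfl⟩ : ∃ M, N = M + 1 := ⟨N - 1, by omega⟩
  unfold gfun
  rw [show M + 1 - 1 = M from rfl, show (2 : ℕ) - 1 = 1 from rfl,
    Nat.descFactorial_one,
    show (M + 1 + 2).factorial = (M + 3) * ((M + 2) * ((M + 1) * M.factorial)) from by
      rw [show M + 1 + 2 = (M + 2) + 1 from by ring, Nat.factorial_succ,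
        show M + 2 = (M + 1) + 1 from by ring, Nat.factorial_succ, Nat.factorial_succ]; try ring]
  have h1 : ((M : ℝ)) + 1 ≠ 0 := by positivity
  have h2 : ((M : ℝ)) + 2 ≠ 0 := by positivity
  have h3 : ((M : ℝ)) + 3 ≠ 0 := by positivity
  have h4 := fact_ne M
  push_cast
  field_simp
  ring

lemma wboundary (K : ℕ) : Wterm K (2 * K + 3) = gfun (2 * K + 2) (2 * K + 2) := by
  unfold Wterm gfun
  rw [show 2 * K + 3 - 1 = 2 * K + 2 from rfl,
    show 2 * K + 3 + 2 * K + 2 = (4 * K + 4) + 1 from by ring,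
    show 2 * K + 3 - 3 - 2 * K = 0 from by omega,
    show 2 * K + 2 - 1 = 2 * K + 1 from rfl,
    show 2 * K + 2 + (2 * K + 2) = 4 * K + 4 from by ring,
    Nat.descFactorial_self,
    show (4 * K + 4 + 1).factorial = (4 * K + 5) * (4 * K + 4).factorial from by
      rw [Nat.factorial_succ]; try ring,
    show (2 * K + 2).factorial = (2 * K + 2) * (2 * K + 1).factorial from by
      rw [show 2 * K + 2 = (2 * K + 1) + 1 from by ring, Nat.factorial_succ]]
  have h1 : (2 * (K : ℝ) + 2) ≠ 0 := by positivity
  have h2 : (2 * (K : ℝ) + 3) ≠ 0 := by positivity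
  have h3 : (4 * (K : ℝ) + 5) ≠ 0 := by positivity
  have h4 := fact_ne (4 * K + 4)
  have h5 := fact_ne (2 * K + 1)
  push_cast
  field_simp
  ring

lemma wstep (n N : ℕ) (h : 2 * n + 3 ≤ N) :
    Wterm n (N + 1) - Wterm n N = gfun N (2 * n + 2) - gfun N (2 * n + 4) := by
  obtain ⟨a, rfl⟩ : ∃ a, N = 2 * n + 3 + a := ⟨N - (2 * n + 3), by omega⟩
  have hn2 : (2 * (n : ℝ) + 2) ≠ 0 := by positivity
  have hn3 : (2 * (n : ℝ) + 3) ≠ 0 := by positivity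
  rcases a with _ | a
  · -- N = 2n+3
    rw [show 2 * n + 3 + 0 + 1 = (2 * n + 3) + 1 from by ring,
      show 2 * n + 3 + 0 = 2 * n + 3 from by ring] at *
    rw [show gfun (2 * n + 3) (2 * n + 4) = gfun (2 * n + 3) ((2 * n + 3) + 1) from by ring_nf,
      gfun_top _ (by omega)]
    unfold Wterm gfun
    rw [show 2 * n + 3 + 1 - 1 = 2 * n + 3 from rfl,
      show 2 * n + 3 + 1 + 2 * n + 2 = (4 * n + 5) + 1 from by ring,
      show 2 * n + 3 + 1 - 3 - 2 * n = 1 from by omega,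
      show 2 * n + 3 - 1 = 2 * n + 2 from rfl,
      show 2 * n + 3 + 2 * n + 2 = (4 * n + 4) + 1 from by ring,
      show 2 * n + 3 - 3 - 2 * n = 0 from by omega,
      show 2 * n + 2 - 1 = 2 * n + 1 from rfl,
      show 2 * n + 3 + (2 * n + 2) = (4 * n + 4) + 1 from by ring,
      df_cast (2 * n + 2) (2 * n + 1) (by omega),
      show 2 * n + 2 - (2 * n + 1) = 1 from by omega,
      show (2 * n + 3).factorial = (2 * n + 3) * (2 * n + 2).factorial from by
        rw [show 2 * n + 3 = (2 * n + 2) + 1 from by ring, Nat.factorial_succ],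
      show ((4 * n + 5) + 1).factorial = (4 * n + 6) * ((4 * n + 5) * (4 * n + 4).factorial) from by
        rw [Nat.factorial_succ, Nat.factorial_succ]; try ring,
      show ((4 * n + 4) + 1).factorial = (4 * n + 5) * (4 * n + 4).factorial from by
        rw [Nat.factorial_succ]; try ring]
    have h4 := fact_ne (4 * n + 4)
    have h5 := fact_ne (2 * n + 2)
    have h6 : (4 * (n : ℝ) + 5) ≠ 0 := by positivity
    have h7 : (4 * (n : ℝ) + 6) ≠ 0 := by positivity
    push_cast
    field_simp
    ring
  · -- N = 2n+4+a
    rw [show 2 * n + 3 + (a + 1) = 2 * n + 4 + a from by ring] at *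
    unfold Wterm gfun
    rw [show 2 * n + 4 + a + 1 - 1 = 2 * n + 4 + a from rfl,
      show 2 * n + 4 + a + 1 + 2 * n + 2 = (4 * n + 6 + a) + 1 from by ring,
      show 2 * n + 4 + a + 1 - 3 - 2 * n = a + 2 from by omega,
      show 2 * n + 4 + a - 1 = 2 * n + 3 + a from by omega,
      show 2 * n + 4 + a + 2 * n + 2 = 4 * n + 6 + a from by ring,
      show 2 * n + 4 + a - 3 - 2 * n = a + 1 from by omega,
      show 2 * n + 2 - 1 = 2 * n + 1 from rfl,
      show 2 * n + 4 - 1 = 2 * n + 3 from rfl,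
      show 2 * n + 4 + a + (2 * n + 2) = 4 * n + 6 + a from by ring,
      show 2 * n + 4 + a + (2 * n + 4) = ((4 * n + 6 + a) + 1) + 1 from by ring,
      df_cast (2 * n + 3 + a) (2 * n + 1) (by omega),
      df_cast (2 * n + 3 + a) (2 * n + 3) (by omega),
      show 2 * n + 3 + a - (2 * n + 1) = a + 2 from by omega,
      show 2 * n + 3 + a - (2 * n + 3) = a from by omega,
      show (2 * n + 4 + a).factorial = (2 * n + 4 + a) * (2 * n + 3 + a).factorial from by
        rw [show 2 * n + 4 + a = (2 * n + 3 + a) + 1 from by ring, Nat.factorial_succ],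
      show ((4 * n + 6 + a) + 1).factorial = (4 * n + 7 + a) * (4 * n + 6 + a).factorial from by
        rw [Nat.factorial_succ]; try ring,
      show (a + 2).factorial = (a + 2) * ((a + 1) * a.factorial) from by
        rw [show a + 2 = (a + 1) + 1 from by ring, Nat.factorial_succ, Nat.factorial_succ],
      show (a + 1).factorial = (a + 1) * a.factorial from Nat.factorial_succ a,
      show (((4 * n + 6 + a) + 1) + 1).factorial
          = (4 * n + 8 + a) * ((4 * n + 7 + a) * (4 * n + 6 + a).factorial) from by
        rw [Nat.factorial_succ, Nat.factorial_succ]; try ring]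
    have h4 := fact_ne (4 * n + 6 + a)
    have h5 := fact_ne (2 * n + 3 + a)
    have h6 := fact_ne a
    have h7 : (4 * (n : ℝ) + 7 + a) ≠ 0 := by positivity
    have h8 : (4 * (n : ℝ) + 8 + a) ≠ 0 := by positivity
    have h9 : ((a : ℝ) + 1) ≠ 0 := by positivity
    have h10 : ((a : ℝ) + 2) ≠ 0 := by positivity
    push_cast
    set F := ((2 * n + 3 + a).factorial : ℝ) with hF
    set G := ((4 * n + 6 + a).factorial : ℝ) with hG
    set A := ((a).factorial : ℝ) with hA
    set_option maxHeartbeats 1000000 in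
    field_simp
    ring

lemma hsum_succ (n : ℕ) : Hsum (n + 1) = Hsum n + 1 / ((n : ℝ) + 1) := by
  simp [Hsum, Finset.sum_range_succ]

lemma main_step (N : ℕ) (h : 1 ≤ N) :
    ∑ n ∈ Finset.range (N / 2), Wterm n (N + 1)
      = (∑ n ∈ Finset.range ((N - 1) / 2), Wterm n N) + gfun N 2 := by
  have tele : ∀ K : ℕ, ∑ n ∈ Finset.range K, (gfun N (2 * n + 2) - gfun N (2 * n + 4))
      = gfun N 2 - gfun N (2 * K + 2) := by
    intro K
    have h0 := Finset.sum_range_sub' (f := fun i => gfun N (2 * i + 2)) (n := K)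
    rw [← h0]
    refine Finset.sum_congr rfl fun i _ => ?_
    rw [show 2 * (i + 1) + 2 = 2 * i + 4 from by ring]
  have split : ∀ K : ℕ, (∀ n < K, 2 * n + 3 ≤ N) →
      ∑ n ∈ Finset.range K, Wterm n (N + 1)
        = (∑ n ∈ Finset.range K, Wterm n N) + (gfun N 2 - gfun N (2 * K + 2)) := by
    intro K hK
    rw [← tele K, ← Finset.sum_add_distrib]
    refine Finset.sum_congr rfl fun i hi => ?_
    have := wstep i N (hK i (Finset.mem_range.mp hi))
    linarith
  rcases Nat.even_or_odd N with ⟨K, hK⟩ | ⟨K, hK⟩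
  · -- N even, N = 2K'+2
    obtain ⟨K', rfl⟩ : ∃ K', N = 2 * K' + 2 := ⟨K - 1, by omega⟩
    rw [show (2 * K' + 2) / 2 = K' + 1 from by omega,
      show (2 * K' + 2 - 1) / 2 = K' from by omega,
      Finset.sum_range_succ, split K' (fun n hn => by omega),
      show 2 * K' + 2 + 1 = 2 * K' + 3 from by ring, wboundary K']
    ring
  · -- N = 2K+1 odd
    subst hK
    rw [show (2 * K + 1) / 2 = K from by omega, show (2 * K + 1 - 1) / 2 = K from by omega,
      split K (fun n hn => by omega),
      show 2 * K + 2 = (2 * K + 1) + 1 from by ring, gfun_top _ (by omega)]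
    ring

lemma key_sum (N : ℕ) (h : 1 ≤ N) :
    ∑ n ∈ Finset.range ((N - 1) / 2), Wterm n N = Hsum (N - 1) + 2 / (N : ℝ) - 2 := by
  induction N, h using Nat.le_induction with
  | base => simp [Hsum]
  | succ N hN ih =>
    rw [show N + 1 - 1 = N from rfl, main_step N hN, ih, gfun_two N hN]
    obtain ⟨M, rfl⟩ : ∃ M, N = M + 1 := ⟨N - 1, by omega⟩
    rw [show M + 1 - 1 = M from rfl, hsum_succ M]
    have h1 : ((M : ℝ)) + 1 ≠ 0 := by positivity
    have h2 : ((M : ℝ)) + 2 ≠ 0 := by positivity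
    push_cast
    field_simp
    ring

noncomputable def bcoef (x : ℝ) (N : ℕ) : ℝ :=
  (Hsum (N - 1) + 2 / (N : ℝ) - 2) / (N : ℝ) * x ^ N

section PartA
variable {x : ℝ} (hx0 : 0 < x) (hx1 : x < 1)
include hx0 hx1

lemma hasSum_logser : HasSum (fun n : ℕ => x ^ (n + 1) / ((n : ℝ) + 1)) (-Real.log (1 - x)) :=
  Real.hasSum_pow_div_log_of_abs_lt_one (by rw [abs_lt]; constructor <;> linarith)

lemma pow_div_le_geom (n : ℕ) {d : ℝ} (hd : 1 ≤ d) : x ^ (n + 1) / d ≤ x ^ n :=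
  le_trans (div_le_self (by positivity) hd)
    (pow_le_pow_of_le_one hx0.le hx1.le (Nat.le_succ n))

lemma summable_norm_logser : Summable (fun n : ℕ => ‖x ^ (n + 1) / ((n : ℝ) + 1)‖) := by
  apply Summable.of_nonneg_of_le (fun n => norm_nonneg _) (fun n => ?_)
    (summable_geometric_of_lt_one hx0.le hx1)
  rw [Real.norm_eq_abs, abs_of_nonneg (by positivity)]
  exact pow_div_le_geom hx0 hx1 n (by exact_mod_cast Nat.le_add_left 1 n)

lemma frac_sum (k : ℕ) :
    ∑ i ∈ Finset.range (k + 1), 1 / (((i : ℝ) + 1) * (((k - i : ℕ) : ℝ) + 1))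
      = 2 * Hsum (k + 1) / ((k : ℝ) + 2) := by
  have hrefl : ∑ i ∈ Finset.range (k + 1), 1 / (((k - i : ℕ) : ℝ) + 1) = Hsum (k + 1) := by
    have h0 := Finset.sum_range_reflect (fun i => 1 / ((i : ℝ) + 1)) (k + 1)
    simp only [show ∀ j : ℕ, k + 1 - 1 - j = k - j from fun j => by omega] at h0
    exact h0.trans rfl
  have per : ∀ i ∈ Finset.range (k + 1),
      1 / (((i : ℝ) + 1) * (((k - i : ℕ) : ℝ) + 1))
        = (1 / ((k : ℝ) + 2)) * (1 / ((i : ℝ) + 1) + 1 / (((k - i : ℕ) : ℝ) + 1)) := by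
    intro i hi
    have hik : i ≤ k := Nat.lt_succ_iff.mp (Finset.mem_range.mp hi)
    have hikR : (i : ℝ) ≤ (k : ℝ) := by exact_mod_cast hik
    rw [Nat.cast_sub hik]
    have h1 : ((i : ℝ)) + 1 ≠ 0 := by positivity
    have h2 : ((k : ℝ)) - (i : ℝ) + 1 ≠ 0 := by intro hc; nlinarith
    have h3 : ((k : ℝ)) + 2 ≠ 0 := by positivity
    field_simp
    ring
  rw [Finset.sum_congr rfl per, ← Finset.mul_sum, Finset.sum_add_distrib, hrefl]
  have hH : ∑ i ∈ Finset.range (k + 1), 1 / ((i : ℝ) + 1) = Hsum (k + 1) := rfl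
  rw [hH]
  ring

lemma hasSum_logsq :
    HasSum (fun k : ℕ => 2 * Hsum (k + 1) / ((k : ℝ) + 2) * x ^ (k + 2))
      ((Real.log (1 - x)) ^ 2) := by
  set a : ℕ → ℝ := fun n => x ^ (n + 1) / ((n : ℝ) + 1) with ha
  have hnorm := summable_norm_logser hx0 hx1
  have hsum : Summable (fun k : ℕ => ∑ p ∈ Finset.HasAntidiagonal.antidiagonal k, a p.1 * a p.2) :=
    (summable_norm_sum_mul_antidiagonal_of_summable_norm hnorm hnorm).of_norm
  have htsum := tsum_mul_tsum_eq_tsum_sum_antidiagonal_of_summable_norm hnorm hnorm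
  have hL : ∑' n, a n = -Real.log (1 - x) := (hasSum_logser hx0 hx1).tsum_eq
  have diag_eq : ∀ k : ℕ, ∑ p ∈ Finset.HasAntidiagonal.antidiagonal k, a p.1 * a p.2
      = 2 * Hsum (k + 1) / ((k : ℝ) + 2) * x ^ (k + 2) := by
    intro k
    rw [Finset.Nat.sum_antidiagonal_eq_sum_range_succ_mk]
    have per : ∀ i ∈ Finset.range (k + 1),
        a i * a (k - i) = x ^ (k + 2) * (1 / (((i : ℝ) + 1) * (((k - i : ℕ) : ℝ) + 1))) := by
      intro i hi
      have hik : i ≤ k := Nat.lt_succ_iff.mp (Finset.mem_range.mp hi)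
      simp only [ha]
      rw [div_mul_div_comm, ← pow_add, show i + 1 + (k - i + 1) = k + 2 from by omega]
      rw [one_div, ← div_eq_mul_inv]
    rw [Finset.sum_congr rfl per, ← Finset.mul_sum, frac_sum hx0 hx1 k]
    ring
  have h2 : HasSum (fun k : ℕ => ∑ p ∈ Finset.HasAntidiagonal.antidiagonal k, a p.1 * a p.2)
      ((Real.log (1 - x)) ^ 2) := by
    have h3 := hsum.hasSum
    rwa [← htsum, hL, neg_mul_neg, ← sq] at h3
  rwa [funext diag_eq] at h2

lemma hasSum_li2 : HasSum (fun n : ℕ => x ^ (n + 1) / ((n : ℝ) + 1) ^ 2) (Li2 x) := by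
  have hs : Summable (fun n : ℕ => x ^ (n + 1) / ((n : ℝ) + 1) ^ 2) := by
    apply Summable.of_nonneg_of_le (fun n => by positivity) (fun n => ?_)
      (summable_geometric_of_lt_one hx0.le hx1)
    exact pow_div_le_geom hx0 hx1 n (by nlinarith [Nat.cast_nonneg (α := ℝ) n])
  exact hs.hasSum

lemma hasSum_bcoef :
    HasSum (bcoef x)
      (1 / 2 * (Real.log (1 - x)) ^ 2 + 2 * Li2 x + 2 * Real.log (1 - x)) := by
  have h1 : HasSum (fun k : ℕ => Hsum (k + 1) / (((k + 1 : ℕ) : ℝ) + 1) * x ^ ((k + 1) + 1))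
      (1 / 2 * (Real.log (1 - x)) ^ 2) := by
    have h0 := (hasSum_logsq hx0 hx1).mul_left (1 / 2)
    have he : (fun k : ℕ => 1 / 2 * (2 * Hsum (k + 1) / ((k : ℝ) + 2) * x ^ (k + 2)))
        = fun k : ℕ => Hsum (k + 1) / (((k + 1 : ℕ) : ℝ) + 1) * x ^ ((k + 1) + 1) := by
      funext k; push_cast; ring
    rw [he] at h0
    exact h0
  have h1' : HasSum (fun n : ℕ => Hsum n / ((n : ℝ) + 1) * x ^ (n + 1))
      (1 / 2 * (Real.log (1 - x)) ^ 2) := by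
    have h4 := (hasSum_nat_add_iff
      (f := fun n : ℕ => Hsum n / ((n : ℝ) + 1) * x ^ (n + 1)) 1).mp h1
    simpa [Hsum] using h4
  have h2 : HasSum (fun n : ℕ => 2 * (x ^ (n + 1) / ((n : ℝ) + 1) ^ 2)) (2 * Li2 x) :=
    (hasSum_li2 hx0 hx1).mul_left 2
  have h3 : HasSum (fun n : ℕ => (-2) * (x ^ (n + 1) / ((n : ℝ) + 1))) (2 * Real.log (1 - x)) := by
    have h0 := (hasSum_logser hx0 hx1).mul_left (-2)
    convert h0 using 1
    · rfl
    ring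
  have htot := (h1'.add h2).add h3
  have heq : (fun n : ℕ => bcoef x (n + 1))
      = fun n : ℕ => (Hsum n / ((n : ℝ) + 1) * x ^ (n + 1)
          + 2 * (x ^ (n + 1) / ((n : ℝ) + 1) ^ 2)) + (-2) * (x ^ (n + 1) / ((n : ℝ) + 1)) := by
    funext n
    unfold bcoef
    rw [show n + 1 - 1 = n from rfl]
    have hy : ((n : ℝ) + 1) ≠ 0 := by positivity
    push_cast
    field_simp
    ring
  have hfin := (hasSum_nat_add_iff (f := bcoef x) 1).mp (heq ▸ htot)
  simpa [bcoef] using hfin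

end PartA

noncomputable def fterm (x : ℝ) (n m : ℕ) : ℝ :=
  (2 / (2 * (n : ℝ) + 2) + 2 / (2 * (n : ℝ) + 3))
    * ((2 * n + 2 + m).factorial : ℝ) ^ 2
    / (((4 * n + 5 + m).factorial : ℝ) * (m.factorial : ℝ))
    * x ^ (2 * n + 3 + m)

lemma poch_nat (k m : ℕ) : poch (k : ℝ) m = (k.ascFactorial m : ℝ) :=
  (Nat.cast_ascFactorial ℝ k m).symm

section PartB
variable {x : ℝ} (hx0 : 0 < x) (hx1 : x < 1)

include hx0 in
lemma fterm_nonneg (n m : ℕ) : 0 ≤ fterm x n m := by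
  unfold fterm
  have h1 : (0:ℝ) < 2 * (n : ℝ) + 2 := by positivity
  have h2 : (0:ℝ) < 2 * (n : ℝ) + 3 := by positivity
  have hx : (0:ℝ) ≤ x := hx0.le
  positivity

include hx0 hx1 in
lemma summable_aux (k c : ℕ) : Summable (fun m : ℕ => ((m : ℝ) + (c : ℝ)) ^ k * x ^ m) := by
  have hx : ‖x‖ < 1 := by rw [Real.norm_eq_abs, abs_lt]; constructor <;> linarith
  have base : Summable (fun m : ℕ => ((m : ℝ)) ^ k * x ^ m) :=
    summable_pow_mul_geometric_of_norm_lt_one k hx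
  have shifted : Summable (fun m : ℕ => (((m + c : ℕ) : ℝ)) ^ k * x ^ (m + c)) :=
    (summable_nat_add_iff c).mpr base
  have h2 := shifted.mul_left ((x ^ c)⁻¹)
  refine h2.congr fun m => ?_
  push_cast
  rw [pow_add]
  field_simp

include hx0 hx1 in
lemma summable_fterm (n : ℕ) : Summable (fterm x n) := by
  set C : ℝ := (2 / (2 * (n : ℝ) + 2) + 2 / (2 * (n : ℝ) + 3)) * x ^ (2 * n + 3) with hC
  apply Summable.of_nonneg_of_le (fun m => fterm_nonneg hx0 n m) (fun m => ?_)
    (((summable_aux hx0 hx1 (2 * n + 2) (2 * n + 2)).mul_left C))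
  have h1 : (0:ℝ) < 2 * (n : ℝ) + 2 := by positivity
  have h2 : (0:ℝ) < 2 * (n : ℝ) + 3 := by positivity
  have hden : (0:ℝ) < ((4 * n + 5 + m).factorial : ℝ) * (m.factorial : ℝ) := by positivity
  have hnat : ((2 * n + 2 + m).factorial) ^ 2
      ≤ ((4 * n + 5 + m).factorial) * ((m.factorial) * (m + (2 * n + 2)) ^ (2 * n + 2)) := by
    have e1 : m.factorial * (m + 1).ascFactorial (2 * n + 2) = (2 * n + 2 + m).factorial := by
      rw [Nat.factorial_mul_ascFactorial m (2 * n + 2), Nat.add_comm]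
    have e2 : (2 * n + 2 + m).factorial ≤ (4 * n + 5 + m).factorial :=
      Nat.factorial_le (by omega)
    have e3 : (m + 1).ascFactorial (2 * n + 2) ≤ (m + (2 * n + 2)) ^ (2 * n + 2) :=
      Nat.ascFactorial_le_pow_add m (2 * n + 2)
    calc ((2 * n + 2 + m).factorial) ^ 2
        = (2 * n + 2 + m).factorial * (2 * n + 2 + m).factorial := sq _
      _ ≤ (4 * n + 5 + m).factorial * (m.factorial * (m + 1).ascFactorial (2 * n + 2)) := by
          rw [e1]; exact Nat.mul_le_mul_right _ e2
      _ ≤ (4 * n + 5 + m).factorial * (m.factorial * (m + (2 * n + 2)) ^ (2 * n + 2)) :=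
          Nat.mul_le_mul_left _ (Nat.mul_le_mul_left _ e3)
  have hreal : (((2 * n + 2 + m).factorial : ℝ)) ^ 2
      ≤ ((4 * n + 5 + m).factorial : ℝ)
        * ((m.factorial : ℝ) * (((m : ℝ)) + ((2 * n + 2 : ℕ) : ℝ)) ^ (2 * n + 2)) := by
    have hc := (Nat.cast_le (α := ℝ)).mpr hnat
    push_cast at hc ⊢
    convert hc using 2 <;> push_cast <;> ring
  have hq : (((2 * n + 2 + m).factorial : ℝ)) ^ 2
        / (((4 * n + 5 + m).factorial : ℝ) * (m.factorial : ℝ))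
      ≤ (((m : ℝ)) + ((2 * n + 2 : ℕ) : ℝ)) ^ (2 * n + 2) := by
    rw [div_le_iff₀ hden]
    calc (((2 * n + 2 + m).factorial : ℝ)) ^ 2
        ≤ ((4 * n + 5 + m).factorial : ℝ)
          * ((m.factorial : ℝ) * (((m : ℝ)) + ((2 * n + 2 : ℕ) : ℝ)) ^ (2 * n + 2)) := hreal
      _ = (((m : ℝ)) + ((2 * n + 2 : ℕ) : ℝ)) ^ (2 * n + 2)
          * (((4 * n + 5 + m).factorial : ℝ) * (m.factorial : ℝ)) := by ring
  have hft : fterm x n m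
      = (2 / (2 * (n : ℝ) + 2) + 2 / (2 * (n : ℝ) + 3)) * x ^ (2 * n + 3 + m)
        * ((((2 * n + 2 + m).factorial : ℝ)) ^ 2
            / (((4 * n + 5 + m).factorial : ℝ) * (m.factorial : ℝ))) := by
    unfold fterm; ring
  rw [hft]
  have hcx : (0:ℝ) ≤ (2 / (2 * (n : ℝ) + 2) + 2 / (2 * (n : ℝ) + 3)) * x ^ (2 * n + 3 + m) := by
    have hx : (0:ℝ) ≤ x := hx0.le
    positivity
  calc (2 / (2 * (n : ℝ) + 2) + 2 / (2 * (n : ℝ) + 3)) * x ^ (2 * n + 3 + m)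
        * ((((2 * n + 2 + m).factorial : ℝ)) ^ 2
            / (((4 * n + 5 + m).factorial : ℝ) * (m.factorial : ℝ)))
      ≤ (2 / (2 * (n : ℝ) + 2) + 2 / (2 * (n : ℝ) + 3)) * x ^ (2 * n + 3 + m)
        * ((((m : ℝ)) + ((2 * n + 2 : ℕ) : ℝ)) ^ (2 * n + 2)) :=
        mul_le_mul_of_nonneg_left hq hcx
    _ = C * ((((m : ℝ)) + ((2 * n + 2 : ℕ) : ℝ)) ^ (2 * n + 2) * x ^ m) := by
        rw [hC, pow_add]; ring

include hx0 hx1 in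
lemma term_hasSum (n : ℕ) : HasSum (fterm x n)
    ((Real.Gamma ((2 * (n : ℝ) + 2) + 1)) ^ 2 / Real.Gamma (2 * (2 * (n : ℝ) + 2) + 1)
      * (2 / ((2 * (n : ℝ) + 2) * ((2 * (n : ℝ) + 2) + 1)))
      * kblock ((2 * (n : ℝ) + 2) + 1) x) := by
  have hG1 : Real.Gamma ((2 * (n : ℝ) + 2) + 1) = ((2 * n + 2).factorial : ℝ) := by
    rw [show (2 * (n : ℝ) + 2) + 1 = ((2 * n + 2 : ℕ) : ℝ) + 1 from by push_cast; ring,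
      Real.Gamma_nat_eq_factorial]
  have hG2 : Real.Gamma (2 * (2 * (n : ℝ) + 2) + 1) = ((4 * n + 4).factorial : ℝ) := by
    rw [show 2 * (2 * (n : ℝ) + 2) + 1 = ((4 * n + 4 : ℕ) : ℝ) + 1 from by push_cast; ring,
      Real.Gamma_nat_eq_factorial]
  have hβ : (2 * (n : ℝ) + 2) + 1 = ((2 * n + 3 : ℕ) : ℝ) := by push_cast; ring
  set T : ℕ → ℝ := fun m =>
    poch ((2 * n + 3 : ℕ) : ℝ) m * poch ((2 * n + 3 : ℕ) : ℝ) m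
      / (poch ((4 * n + 6 : ℕ) : ℝ) m * (m.factorial : ℝ)) * x ^ m with hT
  set D : ℝ := ((2 * n + 2).factorial : ℝ) ^ 2 / ((4 * n + 4).factorial : ℝ)
    * (2 / ((2 * (n : ℝ) + 2) * (2 * (n : ℝ) + 3))) * x ^ (2 * n + 3) with hD
  have h1 : (0:ℝ) < 2 * (n : ℝ) + 2 := by positivity
  have h2 : (0:ℝ) < 2 * (n : ℝ) + 3 := by positivity
  have hDpos : 0 < D := by
    rw [hD]
    have f1 := (4 * n + 4).factorial_pos
    have f2 := (2 * n + 2).factorial_pos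
    positivity
  have ceq : ∀ m, fterm x n m = D * T m := by
    intro m
    have e1 : ((2 * n + 2).factorial : ℝ) * ((2 * n + 3).ascFactorial m : ℝ)
        = ((2 * n + 2 + m).factorial : ℝ) := by
      exact_mod_cast congrArg (Nat.cast (R := ℝ))
        (by rw [show 2 * n + 3 = (2 * n + 2) + 1 from rfl]
            exact Nat.factorial_mul_ascFactorial (2 * n + 2) m)
    have e2 : ((4 * n + 5).factorial : ℝ) * ((4 * n + 6).ascFactorial m : ℝ)
        = ((4 * n + 5 + m).factorial : ℝ) := by
      exact_mod_cast congrArg (Nat.cast (R := ℝ))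
        (by rw [show 4 * n + 6 = (4 * n + 5) + 1 from rfl]
            exact Nat.factorial_mul_ascFactorial (4 * n + 5) m)
    have e3 : ((4 * n + 5).factorial : ℝ) = ((4 * n + 5 : ℕ) : ℝ) * ((4 * n + 4).factorial : ℝ) := by
      exact_mod_cast congrArg (Nat.cast (R := ℝ)) (Nat.factorial_succ (4 * n + 4))
    have a1 : ((2 * n + 3).ascFactorial m : ℝ)
        = ((2 * n + 2 + m).factorial : ℝ) / ((2 * n + 2).factorial : ℝ) := by
      rw [eq_div_iff (fact_ne _), mul_comm]; exact e1
    have a2 : ((4 * n + 6).ascFactorial m : ℝ)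
        = ((4 * n + 5 + m).factorial : ℝ) / ((4 * n + 5).factorial : ℝ) := by
      rw [eq_div_iff (fact_ne _), mul_comm]; exact e2
    rw [hT, hD]
    simp only [poch_nat]
    rw [a1, a2, e3]
    unfold fterm
    have n1 := fact_ne (2 * n + 2 + m)
    have n2 := fact_ne (4 * n + 5 + m)
    have n3 := fact_ne (2 * n + 2)
    have n4 := fact_ne (4 * n + 4)
    have n5 := fact_ne m
    have n6 : ((4 * n + 5 : ℕ) : ℝ) ≠ 0 := by positivity
    rw [pow_add]
    push_cast
    field_simp
    ring
  have sumT : Summable T := by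
    have h5 := (summable_fterm hx0 hx1 n).mul_left (D⁻¹)
    refine h5.congr fun m => ?_
    rw [ceq m, ← mul_assoc, inv_mul_cancel₀ hDpos.ne', one_mul]
  have hasT : HasSum T (F21 ((2 * n + 3 : ℕ) : ℝ) ((2 * n + 3 : ℕ) : ℝ) ((4 * n + 6 : ℕ) : ℝ) x) :=
    sumT.hasSum
  have final := hasT.mul_left D
  have hfe : (fun m => D * T m) = fterm x n := funext fun m => (ceq m).symm
  rw [hfe] at final
  rw [hG1, hG2, hβ]
  unfold kblock
  rw [show (2 : ℝ) * ((2 * n + 3 : ℕ) : ℝ) = ((4 * n + 6 : ℕ) : ℝ) from by push_cast; ring,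
    Real.rpow_natCast]
  convert final using 1
  · rfl
  rw [hD]
  push_cast
  ring

lemma fiber_eq (N : ℕ) :
    ∑ n ∈ Finset.range ((N - 1) / 2), fterm x n (N - 3 - 2 * n) = bcoef x N := by
  rcases Nat.eq_zero_or_pos N with rfl | hN
  · simp [bcoef]
  have hNne : ((N : ℝ)) ≠ 0 := by positivity
  have per : ∀ n ∈ Finset.range ((N - 1) / 2),
      fterm x n (N - 3 - 2 * n) = Wterm n N * x ^ N / (N : ℝ) := by
    intro n hn
    have hn' : 2 * n + 3 ≤ N := by
      have := Finset.mem_range.mp hn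
      omega
    unfold fterm Wterm
    rw [show 2 * n + 2 + (N - 3 - 2 * n) = N - 1 from by omega,
      show 4 * n + 5 + (N - 3 - 2 * n) = N + 2 * n + 2 from by omega,
      show 2 * n + 3 + (N - 3 - 2 * n) = N from by omega]
    field_simp
  rw [Finset.sum_congr rfl per, ← Finset.sum_div, ← Finset.sum_mul, key_sum N hN]
  unfold bcoef
  ring

include hx0 in
lemma bcoef_nonneg (N : ℕ) : 0 ≤ bcoef x N := by
  rw [← fiber_eq]
  exact Finset.sum_nonneg fun n _ => fterm_nonneg hx0 n _

end PartB

/-- for x ∈ (0,1), summing SL(2,ℝ) blocks over even spins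
ℓ = 2,4,6,… (here ℓ = 2(n+1)) weighted by the inverse conformal spin gives
`∑ (Γ(ℓ+1)²/Γ(2ℓ+1))·(2/(ℓ(ℓ+1)))·k_{ℓ+1}(x)
  = ½ log²(1−x) + 2 Li₂(x) + 2 log(1−x)`. -/
theorem sum_blocks_inverse_conformal_spin (x : ℝ) (hx : x ∈ Set.Ioo (0 : ℝ) 1) :
    ∑' n : ℕ,
        (Real.Gamma ((2 * (n : ℝ) + 2) + 1)) ^ 2 / Real.Gamma (2 * (2 * (n : ℝ) + 2) + 1)
          * (2 / ((2 * (n : ℝ) + 2) * ((2 * (n : ℝ) + 2) + 1)))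
          * kblock ((2 * (n : ℝ) + 2) + 1) x
      = 1 / 2 * (Real.log (1 - x)) ^ 2 + 2 * Li2 x + 2 * Real.log (1 - x) := by
  obtain ⟨hx0, hx1⟩ := hx
  set term : ℕ → ℝ := fun n =>
    (Real.Gamma ((2 * (n : ℝ) + 2) + 1)) ^ 2 / Real.Gamma (2 * (2 * (n : ℝ) + 2) + 1)
      * (2 / ((2 * (n : ℝ) + 2) * ((2 * (n : ℝ) + 2) + 1)))
      * kblock ((2 * (n : ℝ) + 2) + 1) x with hterm
  set S : ℝ := 1 / 2 * (Real.log (1 - x)) ^ 2 + 2 * Li2 x + 2 * Real.log (1 - x) with hS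
  have hhs : ∀ n, HasSum (fterm x n) (term n) := fun n => term_hasSum hx0 hx1 n
  have htermnn : ∀ n, 0 ≤ term n := fun n => (hhs n).nonneg fun m => fterm_nonneg hx0 n m
  have hbS : HasSum (bcoef x) S := hasSum_bcoef hx0 hx1
  have hbnn : ∀ N, 0 ≤ bcoef x N := fun N => bcoef_nonneg hx0 N
  have hSnn : 0 ≤ S := hbS.nonneg hbnn
  set φ : ℕ → ℕ → ENNReal := fun n N =>
    if 2 * n + 3 ≤ N then ENNReal.ofReal (fterm x n (N - (2 * n + 3))) else 0 with hφ
  have step2 : ∀ n, ∑' m, ENNReal.ofReal (fterm x n m) = ∑' N, φ n N := by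
    intro n
    have hinj : Function.Injective (fun m : ℕ => m + (2 * n + 3)) := add_left_injective _
    have hsupp : ∀ N, N ∉ Set.range (fun m : ℕ => m + (2 * n + 3)) → φ n N = 0 := by
      intro N hN
      have hle : ¬ (2 * n + 3 ≤ N) := by
        intro hle
        exact hN ⟨N - (2 * n + 3), show N - (2 * n + 3) + (2 * n + 3) = N from by omega⟩
      simp [hφ, hle]
    have h8 := Function.Injective.tsum_eq hinj (f := φ n)
      (Function.support_subset_iff'.mpr hsupp)
    rw [← h8]
    refine tsum_congr fun m => ?_
    simp only [hφ, if_pos (by omega : 2 * n + 3 ≤ m + (2 * n + 3))]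
    rw [show m + (2 * n + 3) - (2 * n + 3) = m from by omega]
  have hE : ∑' n : ℕ, ENNReal.ofReal (term n) = ENNReal.ofReal S := by
    calc ∑' n : ℕ, ENNReal.ofReal (term n)
        = ∑' n : ℕ, ∑' m : ℕ, ENNReal.ofReal (fterm x n m) := by
          refine tsum_congr fun n => ?_
          rw [← (hhs n).tsum_eq,
            ENNReal.ofReal_tsum_of_nonneg (fun m => fterm_nonneg hx0 n m) (hhs n).summable]
      _ = ∑' n : ℕ, ∑' N : ℕ, φ n N := tsum_congr step2
      _ = ∑' N : ℕ, ∑' n : ℕ, φ n N := ENNReal.tsum_comm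
      _ = ∑' N : ℕ, ENNReal.ofReal (bcoef x N) := by
          refine tsum_congr fun N => ?_
          have hvanish : ∀ n ∉ Finset.range ((N - 1) / 2), φ n N = 0 := by
            intro n hn
            have hn' : ¬ (2 * n + 3 ≤ N) := by
              have := Finset.mem_range.not.mp hn
              omega
            simp [hφ, hn']
          rw [tsum_eq_sum hvanish]
          have hterm_eq : ∀ n ∈ Finset.range ((N - 1) / 2),
              φ n N = ENNReal.ofReal (fterm x n (N - 3 - 2 * n)) := by
            intro n hn
            have h3 : 2 * n + 3 ≤ N := by
              have := Finset.mem_range.mp hn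
              omega
            simp only [hφ, if_pos h3]
            rw [show N - (2 * n + 3) = N - 3 - 2 * n from by omega]
          rw [Finset.sum_congr rfl hterm_eq,
            ← ENNReal.ofReal_sum_of_nonneg (fun n _ => fterm_nonneg hx0 n _), fiber_eq]
      _ = ENNReal.ofReal S := by
          rw [← ENNReal.ofReal_tsum_of_nonneg hbnn hbS.summable, hbS.tsum_eq]
  have hsumm : Summable term := by
    have hne : (∑' n, ENNReal.ofReal (term n)) ≠ ⊤ := by
      rw [hE]; exact ENNReal.ofReal_ne_top
    have h7 := ENNReal.summable_toReal hne
    refine h7.congr fun n => ?_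
    exact ENNReal.toReal_ofReal (htermnn n)
  have hfin : ENNReal.ofReal (∑' n, term n) = ENNReal.ofReal S := by
    rw [ENNReal.ofReal_tsum_of_nonneg htermnn hsumm, hE]
  exact (ENNReal.ofReal_eq_ofReal_iff (tsum_nonneg htermnn) hSnn).mp hfin
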